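/- Let μ and μ' be two stable matchings of the same stable marriage instance, let m be a man with w = μ(m), and suppose w ≻_m μ'(m). Then the woman w strictly prefers her partner in μ' to m, i.e., μ'⁻¹(w) ≻_w m. -/

import Mathlib

/-- A stable marriage instance: finite sets `M` of men and `W` of women of equal
positive cardinality, with strict total preference orders for each agent. -/
structure SMInstance (M W : Type) [Fintype M] [Fintype W] where
  card_eq : Fintype.card M = Fintype.card W
  card_pos : 1 ≤ Fintype.card M
  prefM : M → W → W → Prop
  prefW : W → M → M → Prop
  prefM_sto : ∀ m, IsStrictTotalOrder W (prefM m)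
  prefW_sto : ∀ w, IsStrictTotalOrder M (prefW w)

/-- A pair `(m, w)` blocks the matching `μ` if `w ≻_m μ(m)` and `m ≻_w μ⁻¹(w)`. -/
def SMInstance.Blocks {M W : Type} [Fintype M] [Fintype W]
    (I : SMInstance M W) (μ : M ≃ W) (m : M) (w : W) : Prop :=
  I.prefM m w (μ m) ∧ I.prefW w m (μ.symm w)

/-- A matching is stable if no pair blocks it. -/
def SMInstance.Stable {M W : Type} [Fintype M] [Fintype W]
    (I : SMInstance M W) (μ : M ≃ W) : Prop :=
  ∀ m w, ¬ I.Blocks μ m w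

/-- If `μ` and `μ'` are stable matchings, `w = μ(m)` and `m` strictly prefers `w`
to `μ'(m)`, then `w` strictly prefers her partner in `μ'` to `m`. -/
theorem woman_prefers_other_partner {M W : Type} [Fintype M] [Fintype W]
    (I : SMInstance M W) (μ μ' : M ≃ W) (hμ : I.Stable μ) (hμ' : I.Stable μ')
    (m : M) (w : W) (hw : w = μ m) (hpref : I.prefM m w (μ' m)) :
    I.prefW w (μ'.symm w) m := by
  have hnb := hμ' m w
  have hnot : ¬ I.prefW w m (μ'.symm w) := fun h => hnb ⟨hpref, h⟩
  rcases (by have := (I.prefW_sto w).trichotomous (μ'.symm w) m; tauto : I.prefW w (μ'.symm w) m ∨ μ'.symm w = m ∨ I.prefW w m (μ'.symm w)) with h | h | h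
  · exact h
  · exfalso
    have : μ' m = w := by rw [← h, Equiv.apply_symm_apply]
    exact (I.prefM_sto m).irrefl w (this ▸ hpref)
  · exact absurd h hnot
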